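/- Let n ≥ 1, h > 0 and θ ∈ ℝ. Suppose φ : ℝ → ℝ is (n−1)-times continuously differentiable on the closed interval [θ, θ + n·h] and its (n−1)-st derivative is differentiable on the open interval (θ, θ + n·h). Then there exist points ξ_1, …, ξ_n with ξ_k ∈ (θ, θ + k·h) for each 1 ≤ k ≤ n such that ∑_{k=0}^{n} (−1)^k · C(n,k) · φ(θ + k·h) = (h^n / n!) · ∑_{k=1}^{n} (−1)^k · k^n · C(n,k) · φ^{(n)}(ξ_k). -/

import Mathlib

open Set

private lemma pascal_step (n : ℕ) (f : ℕ → ℝ) :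
    ∑ k ∈ Finset.range (n + 2), (-1 : ℝ) ^ k * ((n+1).choose k : ℝ) * f k =
      ∑ k ∈ Finset.range (n + 1), (-1 : ℝ) ^ k * (n.choose k : ℝ) * (f k - f (k + 1)) := by
  have key : ∑ k ∈ Finset.range (n + 1), (-1 : ℝ) ^ (k+1) * (n.choose (k+1) : ℝ) * f (k+1)
      + f 0 = ∑ k ∈ Finset.range (n + 1), (-1 : ℝ) ^ k * (n.choose k : ℝ) * f k := by
    rw [Finset.sum_range_succ' (fun k => (-1 : ℝ) ^ k * (n.choose k : ℝ) * f k) n]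
    rw [Finset.sum_range_succ]
    simp [Nat.choose_succ_self]
  rw [Finset.sum_range_succ' (fun k => (-1 : ℝ) ^ k * ((n+1).choose k : ℝ) * f k) (n+1)]
  have hcast : ∀ k, (((n+1).choose (k+1) : ℕ) : ℝ) = (n.choose k : ℝ) + (n.choose (k+1) : ℝ) := by
    intro k
    rw [Nat.choose_succ_succ]
    push_cast
    ring
  simp_rw [hcast]
  have expand : ∀ k ∈ Finset.range (n+1),
      (-1 : ℝ) ^ (k+1) * ((n.choose k : ℝ) + (n.choose (k+1) : ℝ)) * f (k+1)
      = -((-1 : ℝ) ^ k * (n.choose k : ℝ) * f (k+1)) + (-1 : ℝ)^(k+1) * (n.choose (k+1) : ℝ) * f (k+1) := by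
    intro k _
    ring
  rw [Finset.sum_congr rfl expand, Finset.sum_add_distrib, Finset.sum_neg_distrib]
  have rhs : ∀ k ∈ Finset.range (n+1),
      (-1 : ℝ) ^ k * (n.choose k : ℝ) * (f k - f (k+1))
      = (-1 : ℝ) ^ k * (n.choose k : ℝ) * f k - (-1 : ℝ) ^ k * (n.choose k : ℝ) * f (k+1) := by
    intro k _; ring
  rw [Finset.sum_congr rfl rhs, Finset.sum_sub_distrib]
  simp only [Nat.choose_zero_right, Nat.cast_one, pow_zero, one_mul]
  linarith [key]

private lemma expandpow (j : ℕ) : ∀ k : ℕ, (k : ℝ) ^ j - ((k + 1 : ℕ) : ℝ) ^ j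
    = -∑ i ∈ Finset.range j, (j.choose i : ℝ) * (k : ℝ) ^ i := by
  intro k
  have h1 := add_pow (k : ℝ) 1 j
  rw [Finset.sum_range_succ] at h1
  simp only [one_pow, mul_one, Nat.choose_self, Nat.cast_one] at h1
  have h2 : ∑ x ∈ Finset.range j, (k:ℝ)^x * (j.choose x : ℝ)
      = ∑ i ∈ Finset.range j, (j.choose i : ℝ) * (k:ℝ)^i :=
    Finset.sum_congr rfl fun i _ => by ring
  rw [h2] at h1
  push_cast
  rw [h1]
  ring

private lemma alt_sum_choose_pow :
    ∀ n : ℕ, ∀ j < n, ∑ k ∈ Finset.range (n + 1),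
      (-1 : ℝ) ^ k * (n.choose k : ℝ) * (k : ℝ) ^ j = 0 := by
  intro n
  induction n with
  | zero => intro j hj; omega
  | succ n ih =>
    intro j hj
    rw [show n + 1 + 1 = n + 2 from rfl, pascal_step n (fun k => (k : ℝ) ^ j)]
    have step : ∀ k ∈ Finset.range (n+1),
        (-1 : ℝ) ^ k * (n.choose k : ℝ) * ((k : ℝ) ^ j - ((k + 1 : ℕ) : ℝ) ^ j)
        = ∑ i ∈ Finset.range j, -((j.choose i : ℝ) * ((-1 : ℝ) ^ k * (n.choose k : ℝ) * (k : ℝ) ^ i)) := by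
      intro k _
      rw [expandpow j k, mul_neg, Finset.mul_sum, ← Finset.sum_neg_distrib]
      exact Finset.sum_congr rfl fun i _ => by ring
    rw [Finset.sum_congr rfl step, Finset.sum_comm]
    apply Finset.sum_eq_zero
    intro i hi
    have hin : i < n := lt_of_lt_of_le (Finset.mem_range.mp hi) (Nat.lt_succ_iff.mp hj)
    have h0 := ih i hin
    have : ∑ x ∈ Finset.range (n + 1), -((j.choose i : ℝ) * ((-1 : ℝ) ^ x * (n.choose x : ℝ) * (x : ℝ) ^ i))
        = -((j.choose i : ℝ) * ∑ x ∈ Finset.range (n + 1), (-1 : ℝ) ^ x * (n.choose x : ℝ) * (x : ℝ) ^ i) := by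
      rw [Finset.mul_sum, ← Finset.sum_neg_distrib]
    rw [this, h0, mul_zero, neg_zero]

private lemma icc_eventuallyEq {a c b x : ℝ} (hxc : x < c) (hcb : c ≤ b) :
    Icc a c =ᶠ[nhds x] Icc a b := by
  rw [Filter.eventuallyEq_set]
  filter_upwards [Iio_mem_nhds hxc] with y hy
  simp only [mem_Icc, mem_Iio] at *
  constructor
  · rintro ⟨h1, h2⟩; exact ⟨h1, le_trans hy.le hcb⟩
  · rintro ⟨h1, _⟩; exact ⟨h1, hy.le⟩

private lemma iterCongr {a c b x : ℝ} (hxc : x < c) (hcb : c ≤ b) (m : ℕ) (f : ℝ → ℝ) :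
    iteratedDerivWithin m f (Icc a c) x = iteratedDerivWithin m f (Icc a b) x := by
  rw [iteratedDerivWithin_eq_iteratedFDerivWithin, iteratedDerivWithin_eq_iteratedFDerivWithin,
    iteratedFDerivWithin_congr_set (icc_eventuallyEq hxc hcb)]

open Set in
/-- the n-th forward finite difference of `φ` at `θ` with step `h`
equals `(h^n/n!) ∑_{k=1}^n (-1)^k k^n C(n,k) φ⁽ⁿ⁾(ξ_k)` for some
`ξ_k ∈ (θ, θ + k h)`. -/
theorem blend_finite_difference_lagrange_form
    (n : ℕ) (hn : 1 ≤ n) (h : ℝ) (hh : 0 < h) (θ : ℝ) (φ : ℝ → ℝ)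
    (hC : ContDiffOn ℝ (n - 1 : ℕ) φ (Icc θ (θ + n * h)))
    (hD : DifferentiableOn ℝ
      (iteratedDerivWithin (n - 1) φ (Icc θ (θ + n * h))) (Ioo θ (θ + n * h))) :
    ∃ ξ : ℕ → ℝ, (∀ k, 1 ≤ k → k ≤ n → ξ k ∈ Ioo θ (θ + k * h)) ∧
      ∑ k ∈ Finset.range (n + 1),
          (-1 : ℝ) ^ k * (n.choose k : ℝ) * φ (θ + k * h) =
        (h ^ n / (n.factorial : ℝ)) *
          ∑ k ∈ Finset.Icc 1 n,
            (-1 : ℝ) ^ k * (k : ℝ) ^ n * (n.choose k : ℝ) *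
              iteratedDerivWithin n φ (Icc θ (θ + n * h)) (ξ k) := by
  obtain ⟨m, rfl⟩ : ∃ m, n = m + 1 := ⟨n - 1, by omega⟩
  simp only [Nat.add_sub_cancel] at hC hD
  have hb : ∀ k : ℕ, k ≤ m + 1 → θ + (k : ℝ) * h ≤ θ + ((m + 1 : ℕ) : ℝ) * h := by
    intro k hk
    have : (k : ℝ) ≤ ((m + 1 : ℕ) : ℝ) := Nat.cast_le.mpr hk
    nlinarith
  have key : ∀ k : ℕ, 1 ≤ k → k ≤ m + 1 → ∃ x ∈ Ioo θ (θ + (k : ℝ) * h),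
      φ (θ + (k : ℝ) * h) - taylorWithinEval φ m (Icc θ (θ + (k : ℝ) * h)) θ (θ + (k : ℝ) * h)
        = iteratedDerivWithin (m + 1) φ (Icc θ (θ + (k : ℝ) * h)) x
          * ((θ + (k : ℝ) * h) - θ) ^ (m + 1) / ((m + 1).factorial : ℝ) := by
    intro k hk1 hk2
    have h1 : (1 : ℝ) ≤ (k : ℝ) := by exact_mod_cast hk1
    have hθc : θ < θ + (k : ℝ) * h := by nlinarith
    have := taylor_mean_remainder_lagrange hθc.ne
      (by rw [uIcc_of_le hθc.le]; exact (hC.mono (Icc_subset_Icc_right (hb k hk2))))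
      (by rw [uIcc_of_le hθc.le, uIoo_of_le hθc.le]; exact ((hD.mono (Ioo_subset_Ioo_right (hb k hk2))).congr
        (fun x hx => iterCongr hx.2 (hb k hk2) m φ)))
    rw [uIcc_of_le hθc.le, uIoo_of_le hθc.le] at this
    exact this
  have key' : ∀ k : ℕ, ∃ x, 1 ≤ k → k ≤ m + 1 → x ∈ Ioo θ (θ + (k : ℝ) * h) ∧
      φ (θ + (k : ℝ) * h) - taylorWithinEval φ m (Icc θ (θ + (k : ℝ) * h)) θ (θ + (k : ℝ) * h)
        = iteratedDerivWithin (m + 1) φ (Icc θ (θ + (k : ℝ) * h)) x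
          * ((θ + (k : ℝ) * h) - θ) ^ (m + 1) / ((m + 1).factorial : ℝ) := by
    intro k
    by_cases hk : 1 ≤ k ∧ k ≤ m + 1
    · obtain ⟨x, h1, h2⟩ := key k hk.1 hk.2
      exact ⟨x, fun _ _ => ⟨h1, h2⟩⟩
    · exact ⟨θ + h / 2, fun h1 h2 => absurd ⟨h1, h2⟩ hk⟩
  choose ξ hξ using key'
  refine ⟨ξ, fun k hk1 hk2 => (hξ k hk1 hk2).1, ?_⟩
  have expandφ : ∀ k : ℕ, k ≤ m + 1 → φ (θ + (k : ℝ) * h) =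
      (∑ j ∈ Finset.range (m + 1), ((j.factorial : ℝ))⁻¹ * ((k : ℝ) * h) ^ j *
          iteratedDerivWithin j φ (Icc θ (θ + ((m + 1 : ℕ) : ℝ) * h)) θ)
      + iteratedDerivWithin (m + 1) φ (Icc θ (θ + ((m + 1 : ℕ) : ℝ) * h)) (ξ k)
          * ((k : ℝ) * h) ^ (m + 1) / ((m + 1).factorial : ℝ) := by
    intro k hk
    rcases Nat.eq_zero_or_pos k with rfl | hk1
    · simp only [Nat.cast_zero, zero_mul, add_zero, zero_pow (Nat.succ_ne_zero m),
        mul_zero, zero_div]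
      rw [Finset.sum_eq_single 0]
      · simp
      · intro j _ hj
        rw [zero_pow hj]
        ring
      · intro habs
        exact absurd (Finset.mem_range.mpr (Nat.succ_pos m)) habs
    · obtain ⟨hmem, heq⟩ := hξ k hk1 hk
      have hkb := hb k hk
      rw [taylor_within_apply] at heq
      have hθc : θ < θ + (k : ℝ) * h := lt_trans hmem.1 hmem.2
      have e1 : iteratedDerivWithin (m + 1) φ (Icc θ (θ + (k : ℝ) * h)) (ξ k)
          = iteratedDerivWithin (m + 1) φ (Icc θ (θ + ((m + 1 : ℕ) : ℝ) * h)) (ξ k) :=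
        iterCongr hmem.2 hkb _ φ
      have e2 : ∀ j, iteratedDerivWithin j φ (Icc θ (θ + (k : ℝ) * h)) θ
          = iteratedDerivWithin j φ (Icc θ (θ + ((m + 1 : ℕ) : ℝ) * h)) θ :=
        fun j => iterCongr hθc hkb j φ
      rw [e1] at heq
      simp only [e2, smul_eq_mul, show (θ + (k : ℝ) * h) - θ = (k : ℝ) * h by ring] at heq
      have hs : ∑ j ∈ Finset.range (m + 1),
          ((j.factorial : ℝ))⁻¹ * ((k : ℝ) * h) ^ j *
            iteratedDerivWithin j φ (Icc θ (θ + ((m + 1 : ℕ) : ℝ) * h)) θ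
          = ∑ j ∈ Finset.range (m + 1),
          ((j.factorial : ℝ)⁻¹ * ((k : ℝ) * h) ^ j) *
            iteratedDerivWithin j φ (Icc θ (θ + ((m + 1 : ℕ) : ℝ) * h)) θ :=
        Finset.sum_congr rfl fun j _ => by ring
      rw [hs]
      linarith [heq]
  have hgoalsum : ∑ k ∈ Finset.range (m + 1 + 1),
      (-1 : ℝ) ^ k * ((m + 1).choose k : ℝ) * φ (θ + (k : ℝ) * h)
      = (∑ k ∈ Finset.range (m + 2), (-1 : ℝ) ^ k * ((m + 1).choose k : ℝ) *
          (∑ j ∈ Finset.range (m + 1), ((j.factorial : ℝ))⁻¹ * ((k : ℝ) * h) ^ j *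
            iteratedDerivWithin j φ (Icc θ (θ + ((m + 1 : ℕ) : ℝ) * h)) θ))
        + ∑ k ∈ Finset.range (m + 2), (-1 : ℝ) ^ k * ((m + 1).choose k : ℝ) *
          (iteratedDerivWithin (m + 1) φ (Icc θ (θ + ((m + 1 : ℕ) : ℝ) * h)) (ξ k)
            * ((k : ℝ) * h) ^ (m + 1) / ((m + 1).factorial : ℝ)) := by
    rw [← Finset.sum_add_distrib]
    refine Finset.sum_congr rfl fun k hk => ?_
    rw [expandφ k (by have := Finset.mem_range.mp hk; omega)]
    ring
  have first : ∑ k ∈ Finset.range (m + 2), (-1 : ℝ) ^ k * ((m + 1).choose k : ℝ) *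
      (∑ j ∈ Finset.range (m + 1), ((j.factorial : ℝ))⁻¹ * ((k : ℝ) * h) ^ j *
        iteratedDerivWithin j φ (Icc θ (θ + ((m + 1 : ℕ) : ℝ) * h)) θ) = 0 := by
    simp_rw [Finset.mul_sum]
    rw [Finset.sum_comm]
    refine Finset.sum_eq_zero fun j hj => ?_
    have h0 := alt_sum_choose_pow (m + 1) j (Finset.mem_range.mp hj)
    have : ∑ k ∈ Finset.range (m + 2), (-1 : ℝ) ^ k * ((m + 1).choose k : ℝ) *
        (((j.factorial : ℝ))⁻¹ * ((k : ℝ) * h) ^ j *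
          iteratedDerivWithin j φ (Icc θ (θ + ((m + 1 : ℕ) : ℝ) * h)) θ)
        = ((j.factorial : ℝ)⁻¹ * h ^ j *
            iteratedDerivWithin j φ (Icc θ (θ + ((m + 1 : ℕ) : ℝ) * h)) θ) *
          ∑ k ∈ Finset.range (m + 2), (-1 : ℝ) ^ k * ((m + 1).choose k : ℝ) * (k : ℝ) ^ j := by
      rw [Finset.mul_sum]
      exact Finset.sum_congr rfl fun k _ => by ring
    rw [this, h0, mul_zero]
  have hsub : Finset.Icc 1 (m + 1) ⊆ Finset.range (m + 2) := by
    intro x hx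
    simp only [Finset.mem_Icc, Finset.mem_range] at *
    omega
  have second : ∑ k ∈ Finset.range (m + 2), (-1 : ℝ) ^ k * ((m + 1).choose k : ℝ) *
      (iteratedDerivWithin (m + 1) φ (Icc θ (θ + ((m + 1 : ℕ) : ℝ) * h)) (ξ k)
        * ((k : ℝ) * h) ^ (m + 1) / ((m + 1).factorial : ℝ))
      = (h ^ (m + 1) / ((m + 1).factorial : ℝ)) *
          ∑ k ∈ Finset.Icc 1 (m + 1),
            (-1 : ℝ) ^ k * (k : ℝ) ^ (m + 1) * (((m + 1).choose k : ℕ) : ℝ) *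
              iteratedDerivWithin (m + 1) φ (Icc θ (θ + ((m + 1 : ℕ) : ℝ) * h)) (ξ k) := by
    rw [← Finset.sum_subset hsub (by
      intro x hx hnx
      have hx0 : x = 0 := by
        simp only [Finset.mem_Icc, Finset.mem_range] at *
        omega
      subst hx0
      simp [zero_pow (Nat.succ_ne_zero m)])]
    rw [Finset.mul_sum]
    exact Finset.sum_congr rfl fun k _ => by ring
  rw [hgoalsum, first, zero_add, second]
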